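/- (Proposition 3.2: observability of the initial datum of n.) Let A > 0, 0 ≤ a₁ < a₂ ≤ A and T > max{a₁, A−a₂}. Let μ : [0,A) → [0,∞) be measurable and locally integrable, let φ : ℝ → ℝ be measurable with φ(s) = 0 for a.e. s < T−A, and define n(a,t) = exp(∫₀^a μ(r) dr)·φ(t−a) for (a,t) ∈ (0,A)×[0,T), so that n(a,0) = exp(∫₀^a μ(r) dr)·φ(−a). Then there exists a constant C > 0 depending only on a₁, a₂, A and T (independent of μ and φ) such that ∫₀^A n(a,0)² da ≤ C·∫₀^T ∫_{a₁}^{a₂} n(a,t)² da dt. -/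

import Mathlib

open MeasureTheory Set ENNReal

/-- Proposition 3.2: for `0 ≤ a₁ < a₂ ≤ A` and `T > max{a₁, A−a₂}`, there is a constant
`C > 0` depending only on `a₁, a₂, A, T` such that, for every measurable locally
integrable `μ : [0,A) → [0,∞)` and every measurable `φ : ℝ → ℝ` with `φ(s) = 0` for
a.e. `s < T−A`, the solution `n(a,t) = exp(∫₀^a μ)·φ(t−a)` satisfies
`∫₀^A n(a,0)² da ≤ C·∫₀^T ∫_{a₁}^{a₂} n(a,t)² da dt`. -/
theorem stmt4 (A T a₁ a₂ : ℝ) (hA : 0 < A) (ha₁ : 0 ≤ a₁) (ha : a₁ < a₂) (ha₂ : a₂ ≤ A)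
    (hT : max a₁ (A - a₂) < T) :
    ∃ C > 0, ∀ μ φ : ℝ → ℝ, Measurable μ → (∀ a ∈ Ico 0 A, 0 ≤ μ a) →
      (∀ a ∈ Ico 0 A, IntegrableOn μ (Icc 0 a)) → Measurable φ →
      (∀ᵐ s ∂(volume.restrict (Iio (T - A))), φ s = 0) →
      (∫⁻ a in Ioo 0 A,
          ENNReal.ofReal ((Real.exp (∫ r in (0:ℝ)..a, μ r) * φ (-a)) ^ 2)) ≤
        ENNReal.ofReal C *
          ∫⁻ t in Ioo 0 T, ∫⁻ a in Ioo a₁ a₂,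
            ENNReal.ofReal ((Real.exp (∫ r in (0:ℝ)..a, μ r) * φ (t - a)) ^ 2) := by
  have hTa₁ : a₁ < T := lt_of_le_of_lt (le_max_left _ _) hT
  have hTA : A - a₂ < T := lt_of_le_of_lt (le_max_right _ _) hT
  have hT0 : 0 < T := lt_of_le_of_lt ha₁ hTa₁
  set δ : ℝ := min (min (T - a₁) (a₂ - a₁)) (min T (a₂ - A + T)) with hδdef
  have hδ0 : 0 < δ :=
    lt_min (lt_min (by linarith) (by linarith)) (lt_min hT0 (by linarith))
  refine ⟨1/δ, by positivity, ?_⟩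
  intro μ φ hμm hμ0 hμint hφm hφ0
  -- a globally measurable version of the primitive of μ
  set g : ℝ → ℝ≥0∞ := fun r => ENNReal.ofReal ((Ico (0:ℝ) A).indicator μ r) with hgdef
  have hLmono : Monotone (fun a : ℝ => ∫⁻ r in Ioc (0:ℝ) a, g r) := fun a b hab =>
    lintegral_mono_set (Ioc_subset_Ioc_right hab)
  set G : ℝ → ℝ := fun a => (∫⁻ r in Ioc (0:ℝ) a, g r).toReal with hGdef
  have hGmeas : Measurable G := hLmono.measurable.ennreal_toReal
  have hkey : ∀ a ∈ Ico (0:ℝ) A, G a = ∫ r in (0:ℝ)..a, μ r := by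
    intro a haA
    rw [intervalIntegral.integral_of_le haA.1,
      integral_eq_lintegral_of_nonneg_ae
        ((ae_restrict_iff' measurableSet_Ioc).2 (ae_of_all _ fun r hr =>
          hμ0 r ⟨le_of_lt hr.1, lt_of_le_of_lt hr.2 haA.2⟩))
        hμm.aestronglyMeasurable]
    have : ∫⁻ r in Ioc (0:ℝ) a, g r = ∫⁻ r in Ioc (0:ℝ) a, ENNReal.ofReal (μ r) := by
      refine setLIntegral_congr_fun measurableSet_Ioc (fun r hr => ?_)
      simp [hgdef,
        indicator_of_mem (show r ∈ Ico (0:ℝ) A from ⟨le_of_lt hr.1, lt_of_le_of_lt hr.2 haA.2⟩)]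
    rw [hGdef]
    simp only [this]
  -- monotonicity of the actual primitive on [0, A)
  have hMmono : ∀ b c : ℝ, 0 ≤ b → b ≤ c → c < A →
      (∫ r in (0:ℝ)..b, μ r) ≤ ∫ r in (0:ℝ)..c, μ r := by
    intro b c hb hbc hcA
    have hic : IntegrableOn μ (Icc 0 c) := hμint c ⟨le_trans hb hbc, hcA⟩
    have h1 : IntervalIntegrable μ volume 0 b :=
      (hic.mono_set (by rw [uIcc_of_le hb]; exact Icc_subset_Icc_right hbc)).intervalIntegrable
    have h2 : IntervalIntegrable μ volume b c :=
      (hic.mono_set (by rw [uIcc_of_le hbc]; exact Icc_subset_Icc_left hb)).intervalIntegrable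
    have hadd := intervalIntegral.integral_add_adjacent_intervals h1 h2
    have h3 : 0 ≤ ∫ r in b..c, μ r :=
      intervalIntegral.integral_nonneg hbc fun u hu =>
        hμ0 u ⟨le_trans hb hu.1, lt_of_le_of_lt hu.2 hcA⟩
    linarith
  set h : ℝ → ℝ≥0∞ := fun a => ENNReal.ofReal ((Real.exp (G a) * φ (-a)) ^ 2) with hhdef
  set F : ℝ → ℝ → ℝ≥0∞ := fun t a => ENNReal.ofReal ((Real.exp (G a) * φ (t - a)) ^ 2)
    with hFdef
  have hhmeas : Measurable h :=
    ENNReal.measurable_ofReal.comp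
      (((Real.measurable_exp.comp hGmeas).mul (hφm.comp measurable_neg)).pow_const 2)
  -- rewrite LHS
  have hLHS : (∫⁻ a in Ioo 0 A,
      ENNReal.ofReal ((Real.exp (∫ r in (0:ℝ)..a, μ r) * φ (-a)) ^ 2)) =
      ∫⁻ a in Ioo 0 A, h a := by
    refine setLIntegral_congr_fun measurableSet_Ioo (fun a haa => ?_)
    rw [hhdef]; simp only [hkey a ⟨le_of_lt haa.1, haa.2⟩]
  -- rewrite RHS
  have hRHS : (∫⁻ t in Ioo 0 T, ∫⁻ a in Ioo a₁ a₂,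
      ENNReal.ofReal ((Real.exp (∫ r in (0:ℝ)..a, μ r) * φ (t - a)) ^ 2)) =
      ∫⁻ t in Ioo 0 T, ∫⁻ a in Ioo a₁ a₂, F t a := by
    refine lintegral_congr fun t => ?_
    refine setLIntegral_congr_fun measurableSet_Ioo (fun a haa => ?_)
    rw [hFdef]
    simp only [hkey a ⟨le_trans ha₁ (le_of_lt haa.1), lt_of_lt_of_le haa.2 ha₂⟩]
  -- φ(-a) vanishes a.e. for a > A - T
  have hφ0' : ∀ᵐ s : ℝ, s ∈ Iio (T - A) → φ s = 0 :=
    (ae_restrict_iff' measurableSet_Iio).1 hφ0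
  have hnull : ∀ᵐ a : ℝ, (-a) ∈ Iio (T - A) → φ (-a) = 0 :=
    (Measure.measurePreserving_neg (volume : Measure ℝ)).quasiMeasurePreserving.ae hφ0'
  -- Step 1 : the left side concentrates on (0, A - T]
  have hstep1 : (∫⁻ a in Ioo 0 A, h a) ≤ ∫⁻ a in Ioo 0 (A - T), h a := by
    have hae : ∀ᵐ a ∂(volume.restrict (Ioo (0:ℝ) A)),
        h a = (Ioc 0 (A - T)).indicator h a := by
      filter_upwards [ae_restrict_of_ae hnull, ae_restrict_mem measurableSet_Ioo]
        with a hna haA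
      by_cases hmem : a ∈ Ioc (0:ℝ) (A - T)
      · rw [indicator_of_mem hmem]
      · rw [indicator_of_notMem hmem]
        have : A - T < a := by
          rcases not_and_or.1 hmem with h' | h'
          · exact absurd haA.1 h'
          · exact lt_of_not_ge h'
        have hz : φ (-a) = 0 := hna (by simp only [mem_Iio]; linarith)
        rw [hhdef]; simp [hz]
    calc (∫⁻ a in Ioo 0 A, h a)
        = ∫⁻ a in Ioo 0 A, (Ioc 0 (A - T)).indicator h a := lintegral_congr_ae hae
      _ ≤ ∫⁻ a, (Ioc 0 (A - T)).indicator h a := setLIntegral_le_lintegral _ _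
      _ = ∫⁻ a in Ioc 0 (A - T), h a := lintegral_indicator measurableSet_Ioc h
      _ = ∫⁻ a in Ioo 0 (A - T), h a := (setLIntegral_congr Ioo_ae_eq_Ioc).symm
  -- pointwise claim
  have hclaim : ∀ a ∈ Ioo (0:ℝ) (A - T),
      ENNReal.ofReal δ * h a ≤ ∫⁻ t in Ioo 0 T, (Ioo a₁ a₂).indicator (F t) (a + t) := by
    rintro a ⟨ha0, haAT⟩
    have haA : a < A := by linarith
    set lo := max 0 (a₁ - a) with hlodef
    set hi := min T (a₂ - a) with hhidef
    have hsub : Ioo lo hi ⊆ Ioo 0 T := Ioo_subset_Ioo (le_max_left _ _) (min_le_left _ _)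
    have hδle : δ ≤ hi - lo := by
      rcases le_total a a₁ with hc | hc
      · have hlo : lo = a₁ - a := max_eq_right (by linarith)
        rcases le_total T (a₂ - a) with h' | h'
        · have h1 : δ ≤ T - a₁ := le_trans (min_le_left _ _) (min_le_left _ _)
          rw [hlo, hhidef, min_eq_left h']; linarith
        · have h1 : δ ≤ a₂ - a₁ := le_trans (min_le_left _ _) (min_le_right _ _)
          rw [hlo, hhidef, min_eq_right h']; linarith
      · have hlo : lo = 0 := max_eq_left (by linarith)
        rcases le_total T (a₂ - a) with h' | h'
        · have h1 : δ ≤ T := le_trans (min_le_right _ _) (min_le_left _ _)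
          rw [hlo, hhidef, min_eq_left h']; linarith
        · have h1 : δ ≤ a₂ - A + T := le_trans (min_le_right _ _) (min_le_right _ _)
          rw [hlo, hhidef, min_eq_right h']; linarith
    have hpt : ∀ t ∈ Ioo lo hi, h a ≤ (Ioo a₁ a₂).indicator (F t) (a + t) := by
      rintro t ⟨htlo, hthi⟩
      have ht0 : 0 < t := lt_of_le_of_lt (le_max_left 0 (a₁ - a)) htlo
      have hmem : a + t ∈ Ioo a₁ a₂ := by
        constructor
        · have : a₁ - a ≤ lo := le_max_right _ _
          linarith
        · have : hi ≤ a₂ - a := min_le_right _ _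
          linarith
      rw [indicator_of_mem hmem]
      have hatA : a + t < A := lt_of_lt_of_le hmem.2 ha₂
      have h2 : G a ≤ G (a + t) := by
        rw [hkey a ⟨le_of_lt ha0, haA⟩, hkey (a + t) ⟨by linarith, hatA⟩]
        exact hMmono a (a + t) (le_of_lt ha0) (by linarith) hatA
      rw [hhdef, hFdef]
      refine ENNReal.ofReal_le_ofReal ?_
      have hteq : t - (a + t) = -a := by ring
      rw [hteq, mul_pow, mul_pow]
      exact mul_le_mul_of_nonneg_right
        (pow_le_pow_left₀ (le_of_lt (Real.exp_pos _)) (Real.exp_le_exp.2 h2) 2)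
        (sq_nonneg _)
    calc ENNReal.ofReal δ * h a
        ≤ ENNReal.ofReal (hi - lo) * h a :=
          mul_le_mul_left (ENNReal.ofReal_le_ofReal hδle) _
      _ = ∫⁻ _ in Ioo lo hi, h a := by
          rw [setLIntegral_const, Real.volume_Ioo, mul_comm]
      _ ≤ ∫⁻ t in Ioo lo hi, (Ioo a₁ a₂).indicator (F t) (a + t) :=
          setLIntegral_mono' measurableSet_Ioo hpt
      _ ≤ ∫⁻ t in Ioo 0 T, (Ioo a₁ a₂).indicator (F t) (a + t) := lintegral_mono_set hsub
  -- measurability of the kernel on the product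
  have hFm : Measurable fun p : ℝ × ℝ => F p.2 (p.1 + p.2) := by
    apply ENNReal.measurable_ofReal.comp
    exact ((Real.measurable_exp.comp (hGmeas.comp (measurable_fst.add measurable_snd))).mul
      (hφm.comp (measurable_snd.sub (measurable_fst.add measurable_snd)))).pow_const 2
  have hKmeas : Measurable (Function.uncurry fun a t => (Ioo a₁ a₂).indicator (F t) (a + t)) := by
    have heq : (Function.uncurry fun a t => (Ioo a₁ a₂).indicator (F t) (a + t)) =
        ({p : ℝ × ℝ | p.1 + p.2 ∈ Ioo a₁ a₂}).indicator fun p => F p.2 (p.1 + p.2) := by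
      ext p
      simp only [Function.uncurry, Set.indicator_apply, mem_setOf_eq]
    rw [heq]
    exact hFm.indicator ((measurable_fst.add measurable_snd) measurableSet_Ioo)
  have hmain : ENNReal.ofReal δ * ∫⁻ a in Ioo 0 (A - T), h a ≤
      ∫⁻ t in Ioo 0 T, ∫⁻ a in Ioo a₁ a₂, F t a := by
    calc ENNReal.ofReal δ * ∫⁻ a in Ioo 0 (A - T), h a
        = ∫⁻ a in Ioo 0 (A - T), ENNReal.ofReal δ * h a :=
          (lintegral_const_mul _ hhmeas).symm
      _ ≤ ∫⁻ a in Ioo 0 (A - T), ∫⁻ t in Ioo 0 T, (Ioo a₁ a₂).indicator (F t) (a + t) :=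
          setLIntegral_mono' measurableSet_Ioo hclaim
      _ ≤ ∫⁻ a, ∫⁻ t in Ioo 0 T, (Ioo a₁ a₂).indicator (F t) (a + t) :=
          setLIntegral_le_lintegral _ _
      _ = ∫⁻ t in Ioo 0 T, ∫⁻ a, (Ioo a₁ a₂).indicator (F t) (a + t) :=
          lintegral_lintegral_swap hKmeas.aemeasurable
      _ = ∫⁻ t in Ioo 0 T, ∫⁻ a in Ioo a₁ a₂, F t a := by
          refine lintegral_congr fun t => ?_
          rw [lintegral_add_right_eq_self ((Ioo a₁ a₂).indicator (F t)) t,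
            lintegral_indicator measurableSet_Ioo]
  rw [hLHS, hRHS]
  calc (∫⁻ a in Ioo 0 A, h a) ≤ ∫⁻ a in Ioo 0 (A - T), h a := hstep1
    _ = ENNReal.ofReal (1/δ) * (ENNReal.ofReal δ * ∫⁻ a in Ioo 0 (A - T), h a) := by
        rw [← mul_assoc, ← ENNReal.ofReal_mul (by positivity), one_div,
          inv_mul_cancel₀ (ne_of_gt hδ0), ENNReal.ofReal_one, one_mul]
    _ ≤ ENNReal.ofReal (1/δ) * (∫⁻ t in Ioo 0 T, ∫⁻ a in Ioo a₁ a₂, F t a) :=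
        mul_le_mul_right hmain _
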